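/- Let n ≥ 1, let p be a 132-avoiding permutation of [n], and let 1 ≤ t ≤ n be such that p(1) < p(2) < ⋯ < p(t). Then the values p(1), p(2), …, p(t) are consecutive integers, i.e., p(i) = p(1) + (i−1) for all 1 ≤ i ≤ t. -/
import Mathlib


/-- A permutation `p` of `[n]` (0-based `Fin n`) is 132-avoiding if there are
no positions `a < b < c` with `p a < p c < p b`. -/
def Avoids132 {n : ℕ} (p : Equiv.Perm (Fin n)) : Prop :=
  ∀ a b c : Fin n, a < b → b < c → ¬ (p a < p c ∧ p c < p b)

/-- If `p` is 132-avoiding and its first `t` entries are increasing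
(`p(1) < p(2) < ⋯ < p(t)`, here 0-based: positions `0, …, t-1`), then these
values are consecutive integers: `p(i) = p(1) + (i - 1)` for `1 ≤ i ≤ t`,
i.e. 0-based `(p ⟨i⟩ : ℕ) = (p ⟨0⟩ : ℕ) + i` for `i < t`. -/
theorem stmt7 (n : ℕ) (hn : 1 ≤ n) (p : Equiv.Perm (Fin n)) (hp : Avoids132 p)
    (t : ℕ) (ht1 : 1 ≤ t) (ht2 : t ≤ n)
    (hmono : ∀ i j : ℕ, (hj : j < t) → (hij : i < j) →
      p ⟨i, by omega⟩ < p ⟨j, by omega⟩) :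
    ∀ i : ℕ, (hi : i < t) →
      (p ⟨i, by omega⟩ : ℕ) = (p ⟨0, by omega⟩ : ℕ) + i := by
  intro i
  induction i with
  | zero => intro _; simp
  | succ k ih =>
    intro hi
    have h0n : 0 < n := by omega
    have hkn : k < n := by omega
    have hk1n : k + 1 < n := by omega
    have hk := ih (by omega)
    have h1 : (p ⟨k, hkn⟩ : ℕ) < (p ⟨k + 1, hk1n⟩ : ℕ) :=
      hmono k (k + 1) hi (by omega)
    by_contra h
    have hlt : (p ⟨0, h0n⟩ : ℕ) + (k + 1) < (p ⟨k + 1, hk1n⟩ : ℕ) := by omega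
    have hvn : (p ⟨0, h0n⟩ : ℕ) + (k + 1) < n := by
      have := (p ⟨k + 1, hk1n⟩).isLt; omega
    obtain ⟨c, hcv⟩ := p.surjective ⟨(p ⟨0, h0n⟩ : ℕ) + (k + 1), hvn⟩
    have hcvn : (p c : ℕ) = (p ⟨0, h0n⟩ : ℕ) + (k + 1) := by rw [hcv]
    have hjlt : ∀ j : ℕ, (hjn : j < n) → j ≤ k →
        (p ⟨j, hjn⟩ : ℕ) < (p ⟨0, h0n⟩ : ℕ) + (k + 1) := by
      intro j hjn hj
      rcases Nat.lt_or_ge j k with hjk | hjk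
      · have := hmono j k (by omega) hjk
        rw [Fin.lt_def] at this
        omega
      · have hjk' : j = k := by omega
        subst hjk'; omega
    have hck : (c : ℕ) > k + 1 := by
      by_contra hcle
      push_neg at hcle
      rcases Nat.lt_or_ge (c : ℕ) (k + 1) with hlt' | hge'
      · have := hjlt c c.isLt (by omega)
        have hceq : (⟨(c : ℕ), c.isLt⟩ : Fin n) = c := by ext; simp
        rw [hceq] at this
        omega
      · have hceq : c = ⟨k + 1, hk1n⟩ := Fin.ext (show (c : ℕ) = k + 1 by omega)
        rw [hceq] at hcvn
        omega
    have h0k : (⟨0, h0n⟩ : Fin n) < (⟨k + 1, hk1n⟩ : Fin n) := by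
      rw [Fin.lt_def]; simp
    have hkc : (⟨k + 1, hk1n⟩ : Fin n) < c := by
      rw [Fin.lt_def]; simpa using hck
    exact hp ⟨0, h0n⟩ ⟨k + 1, hk1n⟩ c h0k hkc
      ⟨by rw [Fin.lt_def]; omega, by rw [Fin.lt_def]; omega⟩
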